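/- Let k be a field and K, L division rings which are finite-dimensional k-algebras, and let ι : K → L be a homomorphism of k-algebras. Then there exist n ≥ 1 with dim_k L = n · dim_k K, a homomorphism of k-algebras δ : L → Mₙ(K), and a nonzero vector v ∈ Kⁿ such that (δ(b)v)·a = δ(b·ι(a))v for all a ∈ K and b ∈ L, where (w·a)ᵢ = wᵢa denotes the componentwise right action of K on Kⁿ. -/

import Mathlib

open Matrix

/-- Every `k`-algebra homomorphism `ι : K → L` between division rings that are
finite-dimensional over `k` arises from a `k`-algebra homomorphism `δ : L → Mₙ(K)`
(a regular embedding) and a nonzero vector `v ∈ Kⁿ` via `(δ(b)v)·a = δ(b·ι(a))v`, where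
`n = dim_k L / dim_k K`. -/
theorem exists_regular_embedding_of_algHom
    (k K L : Type*) [Field k]
    [DivisionRing K] [Algebra k K] [FiniteDimensional k K]
    [DivisionRing L] [Algebra k L] [FiniteDimensional k L]
    (ι : K →ₐ[k] L) :
    ∃ n : ℕ, 1 ≤ n ∧ Module.finrank k L = n * Module.finrank k K ∧
      ∃ (δ : L →ₐ[k] Matrix (Fin n) (Fin n) K) (v : Fin n → K),
        v ≠ 0 ∧ ∀ (a : K) (b : L),
          (fun i => ((δ b) *ᵥ v) i * a) = (δ (b * ι a)) *ᵥ v := by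
  letI : Module Kᵐᵒᵖ L := Module.compHom L (RingHom.op ι.toRingHom)
  have hsmul : ∀ (a : K) (x : L), (MulOpposite.op a) • x = x * ι a := fun _ _ => rfl
  haveI : IsScalarTower k Kᵐᵒᵖ L := by
    constructor
    intro c m x
    induction m using MulOpposite.rec' with
    | h a =>
      show x * ι (c • a) = c • (x * ι a)
      rw [Algebra.smul_def, _root_.map_mul, ι.commutes, Algebra.smul_def, ← mul_assoc,
        ← Algebra.commutes, mul_assoc]
  haveI : FiniteDimensional Kᵐᵒᵖ L := Module.Finite.of_restrictScalars_finite k Kᵐᵒᵖ L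
  set n := Module.finrank Kᵐᵒᵖ L with hn
  have hn1 : 1 ≤ n := Module.finrank_pos
  have hK : Module.finrank k Kᵐᵒᵖ = Module.finrank k K :=
    (MulOpposite.opLinearEquiv k : K ≃ₗ[k] Kᵐᵒᵖ).symm.finrank_eq
  have hdim : Module.finrank k L = n * Module.finrank k K := by
    have h := Module.finrank_mul_finrank k Kᵐᵒᵖ L
    rw [hK] at h
    rw [← h, mul_comm]
  let B : Module.Basis (Fin n) Kᵐᵒᵖ L := Module.finBasis Kᵐᵒᵖ L
  let w : L → Fin n → K := fun x i => (B.repr x i).unop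
  have hcomm : ∀ (m : Kᵐᵒᵖ) (b y : L), b * (m • y) = m • (b * y) := by
    intro m b y
    induction m using MulOpposite.rec' with
    | h a => rw [hsmul, hsmul, mul_assoc]
  have hkey : ∀ (b x : L), (Matrix.of fun i j => w (b * B j) i) *ᵥ w x = w (b * x) := by
    intro b x
    funext i
    have hx : b * x = ∑ j, B.repr x j • (b * B j) := by
      conv_lhs => rw [← B.sum_repr x]
      rw [Finset.mul_sum]
      exact Finset.sum_congr rfl fun j _ => hcomm _ _ _
    simp only [mulVec, dotProduct, w, hx, map_sum, _root_.map_smul, Finsupp.coe_smul,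
      Finsupp.coe_finset_sum, Finset.sum_apply, Pi.smul_apply, smul_eq_mul,
      Finset.unop_sum, MulOpposite.unop_mul, Matrix.of_apply]
  have hrepr_self : ∀ (i j : Fin n), w (B j) i = if i = j then 1 else 0 := by
    intro i j
    simp only [w, B.repr_self]
    rw [Finsupp.single_apply]
    split_ifs with h1 h2 h2
    · rfl
    · exact absurd h1.symm h2
    · exact absurd h2.symm h1
    · rfl
  let δ : L →ₐ[k] Matrix (Fin n) (Fin n) K :=
    { toFun := fun b => Matrix.of fun i j => w (b * B j) i
      map_one' := by
        funext i j
        simp only [Matrix.of_apply, one_mul, hrepr_self, Matrix.one_apply]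
      map_mul' := by
        intro b c
        funext i j
        have h := congrFun (hkey b (c * B j)) i
        simp only [mulVec, dotProduct, Matrix.of_apply] at h
        rw [← mul_assoc] at h
        rw [Matrix.mul_apply]
        simp only [Matrix.of_apply]
        exact h.symm
      map_zero' := by
        funext i j
        simp [w, Matrix.of_apply]
      map_add' := by
        intro b c
        funext i j
        simp [w, add_mul, Matrix.of_apply]
      commutes' := by
        intro c
        funext i j
        have h1 : algebraMap k L c * B j = MulOpposite.op (algebraMap k K c) • B j := by
          rw [hsmul, ι.commutes, Algebra.commutes]
        simp only [Matrix.of_apply, w, h1, _root_.map_smul, Finsupp.coe_smul, Pi.smul_apply,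
          smul_eq_mul, MulOpposite.unop_mul, MulOpposite.unop_op, B.repr_self]
        rw [Finsupp.single_apply, Matrix.algebraMap_matrix_apply]
        split_ifs with h1 h2 h2
        · simp
        · exact absurd h1.symm h2
        · exact absurd h2.symm h1
        · simp }
  refine ⟨n, hn1, hdim, δ, w 1, ?_, ?_⟩
  · intro hv
    have h1 : B.repr 1 = 0 := by
      ext i
      have := congrFun hv i
      simpa [w] using congrArg MulOpposite.op this
    exact one_ne_zero (B.repr.injective (by rw [h1, _root_.map_zero]))
  · intro a b
    have hb : (δ b) *ᵥ w 1 = w b := by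
      have := hkey b 1
      rw [mul_one] at this
      exact this
    have hba : (δ (b * ι a)) *ᵥ w 1 = w (b * ι a) := by
      have := hkey (b * ι a) 1
      rw [mul_one] at this
      exact this
    rw [hb, hba]
    funext i
    show w b i * a = w (b * ι a) i
    have : b * ι a = MulOpposite.op a • b := (hsmul a b).symm
    simp only [w, this, _root_.map_smul, Finsupp.coe_smul, Pi.smul_apply, smul_eq_mul,
      MulOpposite.unop_mul, MulOpposite.unop_op]
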